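/- The recurrence coefficients γ_n(z) of the monic truncated Hermite polynomials satisfy the Laguerre–Freud equation γ_n·(n + 1/2 − γ_n − γ_{n+1})·(n − 1/2 − γ_n − γ_{n−1}) = z²·(n/2 − γ_n)² for all n ≥ 1. -/

import Mathlib

open Polynomial

/-- The truncated Hermite linear functional `L[p] = ∫_{-z}^{z} p(x) e^{-x²} dx`. -/
noncomputable def truncL (z : ℝ) (p : Polynomial ℝ) : ℝ :=
  ∫ x in (-z)..z, p.eval x * Real.exp (-x ^ 2)

private lemma truncL_cont (p : Polynomial ℝ) :
    Continuous fun x : ℝ => p.eval x * Real.exp (-x ^ 2) :=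
  p.continuous.mul (Real.continuous_exp.comp (continuous_pow 2).neg)

private lemma truncL_intble (z : ℝ) (p : Polynomial ℝ) :
    IntervalIntegrable (fun x : ℝ => p.eval x * Real.exp (-x ^ 2)) MeasureTheory.volume (-z) z :=
  (truncL_cont p).intervalIntegrable _ _

private lemma truncL_add (z : ℝ) (p q : Polynomial ℝ) :
    truncL z (p + q) = truncL z p + truncL z q := by
  unfold truncL
  rw [← intervalIntegral.integral_add (truncL_intble z p) (truncL_intble z q)]
  simp [add_mul]

private lemma truncL_Cmul (z : ℝ) (a : ℝ) (p : Polynomial ℝ) :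
    truncL z (C a * p) = a * truncL z p := by
  unfold truncL
  rw [← intervalIntegral.integral_const_mul]
  simp [mul_assoc]

private lemma truncL_zero (z : ℝ) : truncL z 0 = 0 := by
  simp [truncL]

private lemma truncL_sub (z : ℝ) (p q : Polynomial ℝ) :
    truncL z (p - q) = truncL z p - truncL z q := by
  have h := truncL_add z (p - q) q
  simp at h
  linarith

private lemma truncL_sq_pos {z : ℝ} (hz : 0 < z) {p : Polynomial ℝ} (hp : p ≠ 0) :
    0 < truncL z (p * p) := by
  unfold truncL
  rw [intervalIntegral.integral_pos_iff_support_of_nonneg_ae ?_ (truncL_intble z _)]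
  · constructor
    · linarith
    · have hU : IsOpen ({x : ℝ | p.eval x ≠ 0} ∩ Set.Ioo (-z) z) :=
        (isOpen_ne.preimage p.continuous).inter isOpen_Ioo
      have hne : ({x : ℝ | p.eval x ≠ 0} ∩ Set.Ioo (-z) z).Nonempty := by
        have hinf : (Set.Ioo (-z) z).Infinite := Set.Ioo_infinite (by linarith)
        obtain ⟨x, hx1, hx2⟩ := (hinf.diff (Polynomial.finite_setOf_isRoot hp)).nonempty
        exact ⟨x, hx2, hx1⟩
      have hsub : ({x : ℝ | p.eval x ≠ 0} ∩ Set.Ioo (-z) z) ⊆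
          Function.support (fun x : ℝ => (p * p).eval x * Real.exp (-x ^ 2)) ∩
            Set.Ioc (-z) z := by
        rintro x ⟨hx1, hx2⟩
        refine ⟨?_, Set.Ioo_subset_Ioc_self hx2⟩
        simp only [Function.mem_support, eval_mul]
        exact ne_of_gt (mul_pos (mul_self_pos.2 hx1) (Real.exp_pos _))
      calc (0 : ENNReal) < MeasureTheory.volume ({x : ℝ | p.eval x ≠ 0} ∩ Set.Ioo (-z) z) :=
            hU.measure_pos _ hne
        _ ≤ _ := MeasureTheory.measure_mono hsub
  · filter_upwards with x
    simp only [eval_mul, Pi.zero_apply]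
    exact mul_nonneg (mul_self_nonneg _) (Real.exp_pos _).le

private lemma truncL_ibp (z : ℝ) (q : Polynomial ℝ) :
    truncL z (derivative q) - 2 * truncL z (X * q) =
      Real.exp (-z ^ 2) * (q.eval z - q.eval (-z)) := by
  have hder : ∀ x ∈ Set.uIcc (-z) z,
      HasDerivAt (fun x : ℝ => q.eval x * Real.exp (-x ^ 2))
        ((derivative q).eval x * Real.exp (-x ^ 2) - 2 * ((X * q).eval x * Real.exp (-x ^ 2)))
        x := by
    intro x _
    have h1 : HasDerivAt (fun x : ℝ => q.eval x) ((derivative q).eval x) x := q.hasDerivAt x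
    have h2 : HasDerivAt (fun x : ℝ => -x ^ 2) (-(2 * x)) x := by
      simpa using (hasDerivAt_pow 2 x).fun_neg
    have h3 := h2.exp
    have h4 := h1.fun_mul h3
    refine h4.congr_deriv ?_
    simp [eval_mul]
    ring
  have hint : IntervalIntegrable
      (fun x : ℝ => (derivative q).eval x * Real.exp (-x ^ 2) -
        2 * ((X * q).eval x * Real.exp (-x ^ 2))) MeasureTheory.volume (-z) z :=
    (truncL_intble z _).sub ((truncL_intble z _).const_mul 2)
  have := intervalIntegral.integral_eq_sub_of_hasDerivAt hder hint
  rw [intervalIntegral.integral_sub (truncL_intble z _) ((truncL_intble z _).const_mul 2),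
    intervalIntegral.integral_const_mul] at this
  unfold truncL
  rw [this]
  have : (-z) ^ 2 = z ^ 2 := by ring
  rw [this]
  ring

private lemma orth_aux {z : ℝ} {F : ℕ → Polynomial ℝ} (hmono : ∀ n, (F n).Monic)
    (hdeg : ∀ n, (F n).natDegree = n)
    (horth : ∀ m n, m ≠ n → truncL z (F m * F n) = 0) :
    ∀ k (q : Polynomial ℝ), q.natDegree ≤ k → ∀ n, k < n → truncL z (q * F n) = 0 := by
  intro k
  induction k with
  | zero =>
    intro q hq n hn
    rw [Polynomial.eq_C_of_natDegree_le_zero hq, truncL_Cmul]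
    have hF0 : F 0 = 1 := (hmono 0).natDegree_eq_zero.mp (hdeg 0)
    have : truncL z (F n) = 0 := by
      have := horth 0 n (by omega)
      rwa [hF0, one_mul] at this
    rw [this, mul_zero]
  | succ k ih =>
    intro q hq n hn
    set c := q.coeff (k + 1) with hc
    set r := q - C c * F (k + 1) with hr
    have hrd : r.natDegree ≤ k := by
      rw [Polynomial.natDegree_le_iff_coeff_eq_zero]
      intro i hi
      rw [hr, Polynomial.coeff_sub, Polynomial.coeff_C_mul]
      rcases eq_or_lt_of_le (Nat.succ_le_of_lt hi) with h | h
      · rw [← h]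
        have := (hmono (k + 1)).coeff_natDegree
        rw [hdeg (k + 1)] at this
        rw [this, mul_one, hc]
        simp
      · rw [Polynomial.coeff_eq_zero_of_natDegree_lt (by omega : q.natDegree < i),
          Polynomial.coeff_eq_zero_of_natDegree_lt (by rw [hdeg]; omega : (F (k+1)).natDegree < i)]
        ring
    have hqeq : q = C c * F (k + 1) + r := by rw [hr]; ring
    rw [hqeq, add_mul, truncL_add, mul_assoc, truncL_Cmul, horth (k + 1) n (by omega),
      ih r hrd n (by omega), mul_zero, add_zero]

private lemma orth_coeff {z : ℝ} {F : ℕ → Polynomial ℝ} (hmono : ∀ n, (F n).Monic)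
    (hdeg : ∀ n, (F n).natDegree = n)
    (horth : ∀ m n, m ≠ n → truncL z (F m * F n) = 0)
    (q : Polynomial ℝ) (n : ℕ) (hq : ∀ i, n ≤ i → q.coeff i = 0) :
    truncL z (q * F n) = 0 := by
  cases n with
  | zero =>
    have : q = 0 := Polynomial.ext fun i => by simpa using hq i (Nat.zero_le i)
    rw [this, zero_mul, truncL_zero]
  | succ k =>
    exact orth_aux hmono hdeg horth k q
      (Polynomial.natDegree_le_iff_coeff_eq_zero.mpr fun m hm => hq m (by omega)) _ (by omega)

private lemma truncL_comp_neg (z : ℝ) (p : Polynomial ℝ) :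
    truncL z (p.comp (-X)) = truncL z p := by
  unfold truncL
  have h1 : ∀ x : ℝ, (p.comp (-X)).eval x * Real.exp (-x ^ 2) =
      (fun y : ℝ => p.eval y * Real.exp (-y ^ 2)) (-x) := by
    intro x
    simp only [Polynomial.eval_comp, Polynomial.eval_neg, Polynomial.eval_X]
    rw [show (-x) ^ 2 = x ^ 2 by ring]
  simp_rw [h1]
  rw [intervalIntegral.integral_comp_neg (fun y : ℝ => p.eval y * Real.exp (-y ^ 2))]
  rw [neg_neg]

private lemma parity_eval {z : ℝ} (hz : 0 < z) {P : ℕ → Polynomial ℝ}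
    (hmonic : ∀ n, (P n).Monic) (hdeg : ∀ n, (P n).natDegree = n)
    (horth : ∀ m n, m ≠ n → truncL z (P m * P n) = 0) :
    ∀ n, (P n).eval (-z) = (-1 : ℝ) ^ n * (P n).eval z := by
  set Q : ℕ → Polynomial ℝ := fun n => C ((-1 : ℝ) ^ n) * (P n).comp (-X) with hQ
  have hcompdeg : ∀ n, ((P n).comp (-X)).natDegree = n := by
    intro n
    rw [Polynomial.natDegree_comp]
    simp [hdeg n]
  have hQmonic : ∀ n, (Q n).Monic := by
    intro n
    have hlc : ((P n).comp (-X)).leadingCoeff = (-1 : ℝ) ^ n := by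
      rw [Polynomial.leadingCoeff_comp (by simp : (-X : Polynomial ℝ).natDegree ≠ 0)]
      simp [(hmonic n).leadingCoeff, hdeg n]
    unfold Q
    unfold Polynomial.Monic
    rw [Polynomial.leadingCoeff_mul, Polynomial.leadingCoeff_C, hlc]
    rw [← pow_add]
    exact Even.neg_one_pow ⟨n, rfl⟩
  have hQdeg : ∀ n, (Q n).natDegree = n := by
    intro n
    have := (hQmonic n).ne_zero
    rw [hQ]
    rw [Polynomial.natDegree_C_mul (by positivity : ((-1:ℝ)^n) ≠ 0), hcompdeg]
  have hQorth : ∀ m n, m ≠ n → truncL z (Q m * Q n) = 0 := by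
    intro m n hmn
    have : Q m * Q n = C ((-1:ℝ)^m * (-1)^n) * ((P m * P n).comp (-X)) := by
      rw [hQ, Polynomial.mul_comp, Polynomial.C_mul]
      ring
    rw [this, truncL_Cmul, truncL_comp_neg, horth m n hmn, mul_zero]
  have hQP : ∀ n, Q n = P n := by
    intro n
    by_contra hne
    have hD : Q n - P n ≠ 0 := sub_ne_zero.mpr hne
    have hDdeg : ∀ i, n ≤ i → (Q n - P n).coeff i = 0 := by
      intro i hi
      rcases eq_or_lt_of_le hi with h | h
      · have e1 := (hQmonic n).coeff_natDegree
        rw [hQdeg n] at e1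
        have e2 := (hmonic n).coeff_natDegree
        rw [hdeg n] at e2
        rw [Polynomial.coeff_sub, ← h, e1, e2, sub_self]
      · rw [Polynomial.coeff_sub,
          Polynomial.coeff_eq_zero_of_natDegree_lt (by rw [hQdeg]; omega),
          Polynomial.coeff_eq_zero_of_natDegree_lt (by rw [hdeg]; omega)]
        ring
    have h1 : truncL z ((Q n - P n) * (Q n - P n)) = 0 := by
      have e1 : truncL z ((Q n - P n) * Q n) = 0 :=
        orth_coeff hQmonic hQdeg hQorth _ n hDdeg
      have e2 : truncL z ((Q n - P n) * P n) = 0 :=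
        orth_coeff hmonic hdeg horth _ n hDdeg
      rw [mul_sub, truncL_sub, e1, e2, sub_zero]
    exact absurd h1 (ne_of_gt (truncL_sq_pos hz hD))
  intro n
  have := congrArg (Polynomial.eval z) (hQP n)
  rw [hQ] at this
  simp only [Polynomial.eval_mul, Polynomial.eval_C, Polynomial.eval_comp,
    Polynomial.eval_neg, Polynomial.eval_X] at this
  have hsq : (-1 : ℝ) ^ n * (-1 : ℝ) ^ n = 1 := by
    rw [← pow_add]; exact Even.neg_one_pow ⟨n, rfl⟩
  calc (P n).eval (-z) = ((-1:ℝ)^n * (-1:ℝ)^n) * (P n).eval (-z) := by rw [hsq, one_mul]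
    _ = (-1:ℝ)^n * ((-1:ℝ)^n * (P n).eval (-z)) := by ring
    _ = (-1:ℝ)^n * (P n).eval z := by rw [this]

private lemma truncL_deriv_hi {z : ℝ} {F : ℕ → Polynomial ℝ} (hmono : ∀ n, (F n).Monic)
    (hdeg : ∀ n, (F n).natDegree = n)
    (horth : ∀ m n, m ≠ n → truncL z (F m * F n) = 0) (n : ℕ) :
    truncL z (derivative (F n) * F (n + 1)) = 0 := by
  apply orth_coeff hmono hdeg horth
  intro i hi
  rw [Polynomial.coeff_derivative,
    Polynomial.coeff_eq_zero_of_natDegree_lt (by rw [hdeg]; omega), zero_mul]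

private lemma truncL_deriv_lo {z : ℝ} {F : ℕ → Polynomial ℝ} (hmono : ∀ n, (F n).Monic)
    (hdeg : ∀ n, (F n).natDegree = n)
    (horth : ∀ m n, m ≠ n → truncL z (F m * F n) = 0) (n : ℕ) :
    truncL z (derivative (F (n + 1)) * F n) = ((n : ℝ) + 1) * truncL z (F n * F n) := by
  set s := derivative (F (n + 1)) - C ((n : ℝ) + 1) * F n with hs
  have hscoeff : ∀ i, n ≤ i → s.coeff i = 0 := by
    intro i hi
    rw [hs, Polynomial.coeff_sub, Polynomial.coeff_derivative, Polynomial.coeff_C_mul]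
    rcases eq_or_lt_of_le hi with h | h
    · have e1 := (hmono (n + 1)).coeff_natDegree
      rw [hdeg (n + 1)] at e1
      have e2 := (hmono n).coeff_natDegree
      rw [hdeg n] at e2
      rw [← h, e1, e2]
      ring
    · rw [Polynomial.coeff_eq_zero_of_natDegree_lt (by rw [hdeg]; omega),
        Polynomial.coeff_eq_zero_of_natDegree_lt (by rw [hdeg]; omega)]
      ring
  have hsplit : derivative (F (n + 1)) = C ((n : ℝ) + 1) * F n + s := by rw [hs]; ring
  rw [hsplit, add_mul, truncL_add, mul_assoc, truncL_Cmul,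
    orth_coeff hmono hdeg horth s n hscoeff, add_zero]

theorem truncated_hermite_laguerre_freud (z : ℝ) (hz : 0 < z)
    (P : ℕ → Polynomial ℝ) (γ h : ℕ → ℝ)
    (hmonic : ∀ n, (P n).Monic) (hdeg : ∀ n, (P n).natDegree = n)
    (horth : ∀ m n, m ≠ n → truncL z (P m * P n) = 0)
    (hP0 : P 0 = 1) (hP1 : P 1 = X)
    (hrec : ∀ n, X * P (n + 1) = P (n + 2) + C (γ (n + 1)) * P n)
    (hh : ∀ n, h n = truncL z (P n * P n)) (hγ0 : γ 0 = 0) :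
    ∀ n : ℕ, 1 ≤ n →
      γ n * ((n : ℝ) + 1 / 2 - γ n - γ (n + 1)) * ((n : ℝ) - 1 / 2 - γ n - γ (n - 1)) =
        z ^ 2 * ((n : ℝ) / 2 - γ n) ^ 2 := by
  have hposh : ∀ k, 0 < h k := fun k => by
    rw [hh k]; exact truncL_sq_pos hz (hmonic k).ne_zero
  have hrecAll : ∀ k, X * P k = P (k + 1) + C (γ k) * P (k - 1) := by
    intro k
    cases k with
    | zero => simp [hP0, hP1, hγ0]
    | succ j => simpa using hrec j
  have hpar : ∀ k, (P k).eval (-z) = (-1 : ℝ) ^ k * (P k).eval z :=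
    parity_eval hz hmonic hdeg horth
  -- L[(x P_k) P_{k+1}] = h_{k+1}
  have hXPP : ∀ k, truncL z ((X * P k) * P (k + 1)) = h (k + 1) := by
    intro k
    rw [hrecAll k, add_mul, truncL_add, mul_assoc, truncL_Cmul,
      horth (k - 1) (k + 1) (by omega), mul_zero, add_zero, hh]
  -- h_{k+1} = γ_{k+1} h_k
  have hG : ∀ k, h (k + 1) = γ (k + 1) * h k := by
    intro k
    have c2 : truncL z ((X * P k) * P (k + 1)) = γ (k + 1) * h k := by
      have e : (X * P k) * P (k + 1) = P k * P (k + 2) + C (γ (k + 1)) * (P k * P k) := by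
        calc (X * P k) * P (k + 1) = P k * (X * P (k + 1)) := by ring
          _ = P k * (P (k + 2) + C (γ (k + 1)) * P k) := by rw [hrec k]
          _ = _ := by ring
      rw [e, truncL_add, truncL_Cmul, horth k (k + 2) (by omega), zero_add, hh]
    rw [← hXPP k, c2]
  have hgam : ∀ k, 1 ≤ k → γ k * h (k - 1) = h k := by
    intro k hk
    obtain ⟨j, rfl⟩ : ∃ j, k = j + 1 := ⟨k - 1, by omega⟩
    simpa using (hG j).symm
  set E := Real.exp (-z ^ 2) with hE
  -- identity (A)
  have hA : ∀ k : ℕ, ((k : ℝ) + 1 - 2 * γ (k + 1)) * h k =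
      2 * E * ((P k).eval z * (P (k + 1)).eval z) := by
    intro k
    have hibp := truncL_ibp z (P k * P (k + 1))
    have d1 : truncL z (derivative (P k * P (k + 1))) = ((k : ℝ) + 1) * h k := by
      rw [Polynomial.derivative_mul, truncL_add, truncL_deriv_hi hmonic hdeg horth k,
        zero_add, mul_comm (P k) (derivative (P (k + 1))),
        truncL_deriv_lo hmonic hdeg horth k, hh]
    have d2 : truncL z (X * (P k * P (k + 1))) = γ (k + 1) * h k := by
      rw [← mul_assoc, hXPP k, hG k]
    have dbd : (P k * P (k + 1)).eval z - (P k * P (k + 1)).eval (-z) =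
        2 * ((P k).eval z * (P (k + 1)).eval z) := by
      have hsign : (-1 : ℝ) ^ k * (-1 : ℝ) ^ (k + 1) = -1 := by
        rw [← pow_add]; exact Odd.neg_one_pow ⟨k, by ring⟩
      simp only [Polynomial.eval_mul, hpar k, hpar (k + 1)]
      linear_combination (-((P k).eval z * (P (k + 1)).eval z)) * hsign
    rw [d1, d2, dbd] at hibp
    linarith
  -- identity (B)
  have hB : ∀ k : ℕ, (2 * (k : ℝ) + 1 - 2 * γ k - 2 * γ (k + 1)) * h k =
      2 * z * E * ((P k).eval z * (P k).eval z) := by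
    intro k
    have hibp := truncL_ibp z (X * (P k * P k))
    have hDlo : γ k * truncL z (derivative (P k) * P (k - 1)) =
        (k : ℝ) * (γ k * h (k - 1)) := by
      cases k with
      | zero => simp [hγ0]
      | succ j =>
        have := truncL_deriv_lo hmonic hdeg horth j
        simp only [Nat.add_sub_cancel]
        rw [this, ← hh]
        push_cast
        ring
    have hDX : truncL z (derivative (P k) * (X * P k)) = (k : ℝ) * (γ k * h (k - 1)) := by
      rw [hrecAll k, mul_add, truncL_add, truncL_deriv_hi hmonic hdeg horth k, zero_add,
        show derivative (P k) * (C (γ k) * P (k - 1)) =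
          C (γ k) * (derivative (P k) * P (k - 1)) by ring,
        truncL_Cmul, hDlo]
    have d1 : truncL z (derivative (X * (P k * P k))) =
        h k + ((k : ℝ) * (γ k * h (k - 1)) + (k : ℝ) * (γ k * h (k - 1))) := by
      have e : derivative (X * (P k * P k)) = P k * P k +
          (derivative (P k) * (X * P k) + derivative (P k) * (X * P k)) := by
        simp only [Polynomial.derivative_mul, Polynomial.derivative_X]
        ring
      rw [e, truncL_add, truncL_add, hDX, ← hh]
    have d2 : truncL z (X * (X * (P k * P k))) =
        γ (k + 1) * h k + γ k * (γ k * h (k - 1)) := by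
      have e : X * (X * (P k * P k)) = P (k + 1) * P (k + 1) +
          (C (γ k) * (P (k + 1) * P (k - 1)) + (C (γ k) * (P (k + 1) * P (k - 1)) +
            C (γ k) * (C (γ k) * (P (k - 1) * P (k - 1))))) := by
        calc X * (X * (P k * P k)) = (X * P k) * (X * P k) := by ring
          _ = (P (k + 1) + C (γ k) * P (k - 1)) * (P (k + 1) + C (γ k) * P (k - 1)) := by
              rw [hrecAll k]
          _ = _ := by ring
      rw [e]
      simp only [truncL_add, truncL_Cmul]
      rw [horth (k + 1) (k - 1) (by omega), ← hh, ← hh, hG k]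
      ring
    have dbd : (X * (P k * P k)).eval z - (X * (P k * P k)).eval (-z) =
        2 * z * ((P k).eval z * (P k).eval z) := by
      have hsq : (-1 : ℝ) ^ k * (-1 : ℝ) ^ k = 1 := by
        rw [← pow_add]; exact Even.neg_one_pow ⟨k, rfl⟩
      simp only [Polynomial.eval_mul, Polynomial.eval_X, hpar k]
      linear_combination (z * ((P k).eval z * (P k).eval z)) * hsq
    rw [d1, d2, dbd] at hibp
    -- hibp : h k + (k γ_k h_{k-1} + k γ_k h_{k-1}) - 2 (γ_{k+1} h k + γ_k (γ_k h_{k-1}))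
    --        = E * (2 z (P_k(z))^2)
    rcases Nat.eq_zero_or_pos k with rfl | hk1
    · simp only [hγ0] at hibp ⊢
      push_cast
      linarith
    · rw [hgam k hk1] at hibp
      linarith
  -- final assembly
  intro n hn
  obtain ⟨m, rfl⟩ : ∃ m, n = m + 1 := ⟨n - 1, by omega⟩
  have eA := hA m
  have eB1 := hB m
  have eB2 := hB (m + 1)
  have eh := hG m
  set a := (P (m + 1)).eval z with ha
  set b := (P m).eval z with hb
  have t1 : ((2 * (m : ℝ) + 1 - 2 * γ m - 2 * γ (m + 1)) * h m) *
      ((2 * ((m : ℝ) + 1) + 1 - 2 * γ (m + 1) - 2 * γ (m + 1 + 1)) * h (m + 1)) =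
      (2 * z * E * (b * b)) * (2 * z * E * (a * a)) := by
    rw [eB1, ← eB2]
    push_cast
    ring
  have t2 : z ^ 2 * ((((m : ℝ) + 1 - 2 * γ (m + 1)) * h m) *
      (((m : ℝ) + 1 - 2 * γ (m + 1)) * h m)) =
      z ^ 2 * ((2 * E * (b * a)) * (2 * E * (b * a))) := by
    rw [eA]
  have key : (γ (m + 1) * (2 * (m : ℝ) + 1 - 2 * γ m - 2 * γ (m + 1)) *
      (2 * ((m : ℝ) + 1) + 1 - 2 * γ (m + 1) - 2 * γ (m + 1 + 1))) * (h m * h m) =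
      (z ^ 2 * ((m : ℝ) + 1 - 2 * γ (m + 1)) ^ 2) * (h m * h m) := by
    linear_combination t1 - t2 - ((2 * (m : ℝ) + 1 - 2 * γ m - 2 * γ (m + 1)) * h m *
      (2 * ((m : ℝ) + 1) + 1 - 2 * γ (m + 1) - 2 * γ (m + 1 + 1))) * eh
  have hcan := mul_right_cancel₀ (ne_of_gt (mul_pos (hposh m) (hposh m))) key
  simp only [Nat.add_sub_cancel]
  push_cast
  push_cast at hcan
  linear_combination hcan / 4
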